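/- Let d ≥ 1, let μ be a probability measure on ℝ^d with compact support, let 0 < t < 1, and set a = 1 − t and σ = t in the Gaussian kernel k(x, x₀) = (2πσ²)^{−d/2} exp(−‖x − a • x₀‖²/(2σ²)), with f(x) = ∫ k(x, x₀) dμ(x₀) > 0, g(x) = ∫ k(x, x₀) • x₀ dμ(x₀), and posterior mean m(x) = g(x)/f(x). Then the modulated drift of Remark 1 satisfies, for all x ∈ ℝ^d: (1/(1 − t)) • (m(x) − x) = (t/(1 − t)²) • x + (t²/(1 − t)²) • (∇f(x)/f(x)). -/

import Mathlib

open MeasureTheory Metric Set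

/-- Integrability of a continuous function against a finite measure concentrated on a
compact set. -/
lemma integrable_of_continuous_of_compact_aesupport
    {α E : Type*} [MeasurableSpace α] [TopologicalSpace α] [OpensMeasurableSpace α]
    [T2Space α] [NormedAddCommGroup E]
    {μ : Measure α} [IsFiniteMeasure μ] {K : Set α} (hK : IsCompact K) (hKc : μ Kᶜ = 0)
    {h : α → E} (hh : Continuous h) : Integrable h μ := by
  have hres : μ.restrict K = μ :=
    Measure.restrict_eq_self_of_ae_mem (by rw [ae_iff]; exact hKc)
  rw [← hres]
  exact hh.continuousOn.integrableOn_compact hK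

/-- Modulated drift of Remark 1: with `a = 1 − t`, `σ = t` (`0 < t < 1`) in the Gaussian
kernel, marginal density `f`, `g(x) = ∫ k(x,x₀) • x₀ dμ(x₀)` and posterior mean
`m(x) = g(x)/f(x)`, the drift satisfies
`(1/(1 − t)) • (m(x) − x) = (t/(1 − t)²) • x + (t²/(1 − t)²) • (∇f(x)/f(x))`. -/
theorem modulated_drift_identity {d : ℕ} (hd : 1 ≤ d)
    (μ : Measure (EuclideanSpace ℝ (Fin d))) [IsProbabilityMeasure μ]
    (hμ : ∃ K : Set (EuclideanSpace ℝ (Fin d)), IsCompact K ∧ μ Kᶜ = 0)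
    (t : ℝ) (ht0 : 0 < t) (ht1 : t < 1)
    (k : EuclideanSpace ℝ (Fin d) → EuclideanSpace ℝ (Fin d) → ℝ)
    (hk : ∀ x x₀, k x x₀ =
      (2 * Real.pi * t ^ 2) ^ (-(d : ℝ) / 2) *
        Real.exp (-‖x - (1 - t) • x₀‖ ^ 2 / (2 * t ^ 2)))
    (f : EuclideanSpace ℝ (Fin d) → ℝ) (hf : ∀ x, f x = ∫ x₀, k x x₀ ∂μ)
    (g : EuclideanSpace ℝ (Fin d) → EuclideanSpace ℝ (Fin d))
    (hg : ∀ x, g x = ∫ x₀, k x x₀ • x₀ ∂μ)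
    (m : EuclideanSpace ℝ (Fin d) → EuclideanSpace ℝ (Fin d))
    (hm : ∀ x, m x = (f x)⁻¹ • g x) :
    ∀ x : EuclideanSpace ℝ (Fin d),
      (1 - t)⁻¹ • (m x - x)
        = (t / (1 - t) ^ 2) • x + (t ^ 2 / (1 - t) ^ 2) • ((f x)⁻¹ • gradient f x) := by
  intro x
  obtain ⟨K, hK, hKc⟩ := hμ
  have ht1' : (0:ℝ) < 1 - t := by linarith
  have ht2 : (0:ℝ) < t ^ 2 := by positivity
  set C : ℝ := (2 * Real.pi * t ^ 2) ^ (-(d : ℝ) / 2) with hC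
  have hCpos : 0 < C := Real.rpow_pos_of_pos (by positivity) _
  -- positivity of k
  have hkpos : ∀ y a : EuclideanSpace ℝ (Fin d), 0 < k y a := by
    intro y a; rw [hk]
    have := Real.exp_pos (-‖y - (1 - t) • a‖ ^ 2 / (2 * t ^ 2))
    positivity
  -- continuity of k in the second variable
  have hkc : ∀ y : EuclideanSpace ℝ (Fin d), Continuous (fun a => k y a) := by
    intro y
    have : Continuous fun a : EuclideanSpace ℝ (Fin d) =>
        C * Real.exp (-‖y - (1 - t) • a‖ ^ 2 / (2 * t ^ 2)) := by fun_prop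
    convert this using 1
    funext a; exact hk y a
  -- uniform upper bound on k
  have hkle : ∀ y a : EuclideanSpace ℝ (Fin d), k y a ≤ C := by
    intro y a
    rw [hk]
    calc C * Real.exp (-‖y - (1 - t) • a‖ ^ 2 / (2 * t ^ 2))
        ≤ C * 1 := by
          apply mul_le_mul_of_nonneg_left _ hCpos.le
          apply Real.exp_le_one_iff.2
          apply div_nonpos_of_nonpos_of_nonneg
          · simp [sq_nonneg]
          · positivity
      _ = C := mul_one C
  -- pointwise derivative of k in the first variable
  have hderiv : ∀ (a y : EuclideanSpace ℝ (Fin d)),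
      HasFDerivAt (fun z => k z a)
        (innerSL ℝ ((-(t ^ 2)⁻¹ * k y a) • (y - (1 - t) • a))) y := by
    intro a y
    have h0 : HasFDerivAt (fun z : EuclideanSpace ℝ (Fin d) => z - (1 - t) • a)
        (ContinuousLinearMap.id ℝ _) y := (hasFDerivAt_id y).sub_const _
    have h1 := h0.norm_sq
    have h2 := h1.const_mul (-(2 * t ^ 2)⁻¹)
    have h3 := h2.exp
    have h4 := h3.const_mul C
    have heq : (fun z : EuclideanSpace ℝ (Fin d) => k z a)
        = fun z => C * Real.exp (-(2 * t ^ 2)⁻¹ * ‖z - (1 - t) • a‖ ^ 2) := by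
      funext z; rw [hk]; ring_nf
    rw [heq]
    refine h4.congr_fderiv ?_
    ext w
    have hexp : -(2 * t ^ 2)⁻¹ * ‖y - (1 - t) • a‖ ^ 2
        = -‖y - (1 - t) • a‖ ^ 2 / (2 * t ^ 2) := by ring
    simp only [ContinuousLinearMap.smul_apply, ContinuousLinearMap.coe_smul',
      Pi.smul_apply, innerSL_apply_apply, ContinuousLinearMap.comp_apply,
      ContinuousLinearMap.id_apply, smul_eq_mul, hk, hexp,
      real_inner_smul_left, nsmul_eq_mul]
    push_cast
    ring
  -- integrability facts
  have int1 : Integrable (fun a => k x a) μ :=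
    integrable_of_continuous_of_compact_aesupport hK hKc (hkc x)
  have int2 : Integrable (fun a => k x a • a) μ :=
    integrable_of_continuous_of_compact_aesupport hK hKc ((hkc x).smul continuous_id)
  have int3 : Integrable (fun a : EuclideanSpace ℝ (Fin d) =>
      (-(t ^ 2)⁻¹ * k x a) • (x - (1 - t) • a)) μ := by
    apply integrable_of_continuous_of_compact_aesupport hK hKc
    have := hkc x
    fun_prop
  -- bound for the derivative
  obtain ⟨R, hR⟩ := isBounded_iff_forall_norm_le.1 hK.isBounded
  have haeK : ∀ᵐ a ∂μ, a ∈ K := by rw [ae_iff]; exact hKc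
  set B : ℝ := (t ^ 2)⁻¹ * C * (‖x‖ + 1 + R) with hB
  have h_bound : ∀ᵐ a ∂μ, ∀ y ∈ ball x 1,
      ‖innerSL ℝ ((-(t ^ 2)⁻¹ * k y a) • (y - (1 - t) • a))‖ ≤ B := by
    filter_upwards [haeK] with a ha y hy
    have hRa : ‖a‖ ≤ R := hR a ha
    have hR0 : (0:ℝ) ≤ R := le_trans (norm_nonneg a) hRa
    rw [innerSL_apply_norm, norm_smul, Real.norm_eq_abs]
    have h1 : |(-(t ^ 2)⁻¹ * k y a)| ≤ (t ^ 2)⁻¹ * C := by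
      rw [abs_mul, abs_neg, abs_inv, abs_of_pos ht2, abs_of_pos (hkpos y a)]
      exact mul_le_mul_of_nonneg_left (hkle y a) (inv_pos.2 ht2).le
    have h2 : ‖y - (1 - t) • a‖ ≤ ‖x‖ + 1 + R := by
      calc ‖y - (1 - t) • a‖ ≤ ‖y‖ + ‖(1 - t) • a‖ := norm_sub_le _ _
        _ ≤ (‖x‖ + 1) + R := by
            apply add_le_add
            · have : ‖y - x‖ < 1 := mem_ball_iff_norm.1 hy
              calc ‖y‖ = ‖x + (y - x)‖ := by rw [show x + (y - x) = y from by abel]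
                _ ≤ ‖x‖ + ‖y - x‖ := norm_add_le _ _
                _ ≤ ‖x‖ + 1 := by linarith
            · rw [norm_smul, Real.norm_eq_abs, abs_of_pos ht1']
              calc (1 - t) * ‖a‖ ≤ 1 * ‖a‖ := by
                    apply mul_le_mul_of_nonneg_right (by linarith) (norm_nonneg a)
                _ = ‖a‖ := one_mul _
                _ ≤ R := hRa
    calc |(-(t ^ 2)⁻¹ * k y a)| * ‖y - (1 - t) • a‖
        ≤ ((t ^ 2)⁻¹ * C) * (‖x‖ + 1 + R) :=
          mul_le_mul h1 h2 (norm_nonneg _) (by positivity)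
      _ = B := by rw [hB]
  -- differentiation under the integral
  have main : HasFDerivAt (fun y => ∫ a, k y a ∂μ)
      (∫ a, innerSL ℝ ((-(t ^ 2)⁻¹ * k x a) • (x - (1 - t) • a)) ∂μ) x := by
    apply hasFDerivAt_integral_of_dominated_of_fderiv_le
      (F' := fun y a => innerSL ℝ ((-(t ^ 2)⁻¹ * k y a) • (y - (1 - t) • a)))
      (bound := fun _ => B) (ball_mem_nhds x one_pos)
    · exact Filter.Eventually.of_forall fun y => (hkc y).aestronglyMeasurable
    · exact int1
    · apply Continuous.aestronglyMeasurable
      have := hkc x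
      fun_prop
    · exact h_bound
    · exact integrable_const B
    · exact Filter.Eventually.of_forall fun a y _ => hderiv a y
  have hfun : (fun y => ∫ a, k y a ∂μ) = f := funext fun y => (hf y).symm
  rw [hfun] at main
  -- identify the derivative as an inner product against a vector
  have hint : ∫ a, innerSL ℝ ((-(t ^ 2)⁻¹ * k x a) • (x - (1 - t) • a)) ∂μ
      = innerSL ℝ (∫ a, (-(t ^ 2)⁻¹ * k x a) • (x - (1 - t) • a) ∂μ) :=
    ContinuousLinearMap.integral_comp_comm (innerSL ℝ) int3
  rw [hint] at main
  -- gradient identification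
  have hgradat : HasGradientAt f (∫ a, (-(t ^ 2)⁻¹ * k x a) • (x - (1 - t) • a) ∂μ) x := by
    rw [hasGradientAt_iff_hasFDerivAt]
    exact main
  have hgrad : gradient f x = ∫ a, (-(t ^ 2)⁻¹ * k x a) • (x - (1 - t) • a) ∂μ :=
    hgradat.gradient
  -- compute the integral
  have hGval : (∫ a, (-(t ^ 2)⁻¹ * k x a) • (x - (1 - t) • a) ∂μ)
      = (-(t ^ 2)⁻¹) • (f x • x - (1 - t) • g x) := by
    have hintegrand : (fun a : EuclideanSpace ℝ (Fin d) =>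
        (-(t ^ 2)⁻¹ * k x a) • (x - (1 - t) • a))
        = fun a => (-(t ^ 2)⁻¹) • (k x a • x - (1 - t) • (k x a • a)) := by
      funext a
      module
    have int4 : Integrable (fun a => (1 - t) • (k x a • a)) μ := int2.smul (1 - t)
    have int5 : Integrable (fun a => k x a • x) μ := int1.smul_const x
    rw [hintegrand, integral_smul]
    congr 1
    rw [integral_sub int5 int4, integral_smul_const, integral_smul, hf, hg]
  rw [hm x, hgrad, hGval]
  -- positivity of f x
  have hfpos : 0 < f x := by
    rw [hf]
    refine (integral_pos_iff_support_of_nonneg (fun a => (hkpos x a).le) int1).2 ?_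
    have hsupp : Function.support (fun a => k x a) = Set.univ := by
      ext a; simp [Function.mem_support, (hkpos x a).ne']
    rw [hsupp]
    simp
  have hfne : f x ≠ 0 := hfpos.ne'
  have htne : t ≠ 0 := ht0.ne'
  have ht1ne : (1:ℝ) - t ≠ 0 := ht1'.ne'
  match_scalars
  · field_simp
  · field_simp
    ring
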